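/- Let S be epsilon-strongly graded by a finite group G with R = S_e. Then S/R is a Frobenius extension: there is a finite set J, elements x_j, y_j ∈ S for j ∈ J, and an R-bimodule map E : S → R such that s = Σ_j x_j E(y_j s) = Σ_j E(s x_j) y_j for every s ∈ S. Concretely, one may take E(s) = s_e (the degree-e component) and the x_j, y_j given by decompositions ε_g = Σ_i u_g^{(i)} v_{g⁻¹}^{(i)}. -/

import Mathlib

open Pointwise

variable {S : Type*} [Ring S] {ι : Type*} [AddGroup ι]

/-- `I` is a unital ideal of the principal component `𝒜 0`. -/
def IsUnitalIdealOfZero (𝒜 : ι → AddSubgroup S) (I : AddSubgroup S) : Prop :=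
  I ≤ 𝒜 0 ∧ (∀ r ∈ 𝒜 0, ∀ x ∈ I, r * x ∈ I ∧ x * r ∈ I) ∧
    ∃ e ∈ I, ∀ x ∈ I, e * x = x ∧ x * e = x

/-- `S` is epsilon-strongly graded by the (additively written) group `ι`:
for each `g`, `𝒜 g * 𝒜 (-g)` is a unital ideal of `𝒜 0` and
`𝒜 g * 𝒜 h = (𝒜 g * 𝒜 (-g)) * 𝒜 (g+h) = 𝒜 (g+h) * (𝒜 (-h) * 𝒜 h)`. -/
def IsEpsilonStronglyGraded (𝒜 : ι → AddSubgroup S) : Prop :=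
  (∀ g : ι, IsUnitalIdealOfZero 𝒜 (𝒜 g * 𝒜 (-g))) ∧
    ∀ g h : ι, 𝒜 g * 𝒜 h = (𝒜 g * 𝒜 (-g)) * 𝒜 (g + h) ∧
      𝒜 g * 𝒜 h = 𝒜 (g + h) * (𝒜 (-h) * 𝒜 h)
/-- The projection of `S` onto its principal component `R = S_e`. -/
def projE [DecidableEq ι] (𝒜 : ι → AddSubgroup S) [GradedRing 𝒜] (s : S) : S :=
  ((DirectSum.decompose 𝒜 s) 0 : S)

/-- If `S` is epsilon-strongly graded by a finite group, then `S/R` is a Frobenius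
extension, with Frobenius system given by the projection `E(s) = s_e` and the elements of
decompositions `ε_g = Σᵢ u_g^{(i)} v_{g⁻¹}^{(i)}`. -/
theorem frobenius_extension [DecidableEq ι] [Fintype ι]
    (𝒜 : ι → AddSubgroup S) [GradedRing 𝒜]
    (h : IsEpsilonStronglyGraded 𝒜) (ε : ι → S)
    (hmem : ∀ g : ι, ε g ∈ 𝒜 g * 𝒜 (-g))
    (hid : ∀ g : ι, ∀ s ∈ 𝒜 g, ε g * s = s ∧ s * ε (-g) = s)
    (n : ι → ℕ) (u : ∀ g : ι, Fin (n g) → S) (v : ∀ g : ι, Fin (n g) → S)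
    (hu : ∀ g i, u g i ∈ 𝒜 g) (hv : ∀ g i, v g i ∈ 𝒜 (-g))
    (huv : ∀ g : ι, ∑ i, u g i * v g i = ε g) :
    -- `E` is an `R`-bimodule map into `R`
    (∀ s : S, projE 𝒜 s ∈ 𝒜 0) ∧
    (∀ s t : S, projE 𝒜 (s + t) = projE 𝒜 s + projE 𝒜 t) ∧
    (∀ r ∈ 𝒜 0, ∀ s : S, projE 𝒜 (r * s) = r * projE 𝒜 s ∧ projE 𝒜 (s * r) = projE 𝒜 s * r) ∧
    -- the Frobenius identities
    (∀ s : S, s = ∑ g : ι, ∑ i, u g i * projE 𝒜 (v g i * s)) ∧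
    (∀ s : S, s = ∑ g : ι, ∑ i, projE 𝒜 (s * u g i) * v g i) := by
  classical
  have hsame : ∀ {x : S}, x ∈ 𝒜 0 → projE 𝒜 x = x := fun hx =>
    DirectSum.decompose_of_mem_same 𝒜 hx
  have hne : ∀ {g : ι} {x : S}, x ∈ 𝒜 g → g ≠ 0 → projE 𝒜 x = 0 := fun hx hg =>
    DirectSum.decompose_of_mem_ne 𝒜 hx hg
  have hE0 : ∀ s : S, projE 𝒜 s ∈ 𝒜 0 := fun s => SetLike.coe_mem _
  have hEadd : ∀ s t : S, projE 𝒜 (s + t) = projE 𝒜 s + projE 𝒜 t := by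
    intro s t
    unfold projE
    rw [DirectSum.decompose_add]
    simp
  have hEzero : projE 𝒜 (0 : S) = 0 := by
    unfold projE; simp
  have hEmul : ∀ r ∈ 𝒜 0, ∀ s : S,
      projE 𝒜 (r * s) = r * projE 𝒜 s ∧ projE 𝒜 (s * r) = projE 𝒜 s * r := by
    intro r hr s
    induction s using DirectSum.Decomposition.inductionOn 𝒜 with
    | zero => simp [hEzero]
    | @homogeneous g m =>
      obtain ⟨m, hm⟩ := m
      by_cases hg : g = 0
      · subst hg
        constructor
        · rw [hsame hm, hsame (show r * m ∈ 𝒜 0 by simpa using SetLike.mul_mem_graded hr hm)]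
        · rw [hsame hm, hsame (show m * r ∈ 𝒜 0 by simpa using SetLike.mul_mem_graded hm hr)]
      · have h1 : r * m ∈ 𝒜 g := by simpa using SetLike.mul_mem_graded hr hm
        have h2 : m * r ∈ 𝒜 g := by simpa using SetLike.mul_mem_graded hm hr
        rw [hne hm hg, hne h1 hg, hne h2 hg, mul_zero, zero_mul]
        exact ⟨rfl, rfl⟩
    | add a b ha hb =>
      rw [mul_add, add_mul, hEadd, hEadd, hEadd, ha.1, hb.1, ha.2, hb.2,
        mul_add, add_mul]
      exact ⟨rfl, rfl⟩
  refine ⟨hE0, hEadd, hEmul, ?_, ?_⟩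
  · intro s
    induction s using DirectSum.Decomposition.inductionOn 𝒜 with
    | zero => simp [mul_zero, hEzero]
    | @homogeneous h m =>
      obtain ⟨m, hm⟩ := m
      show m = _
      rw [Finset.sum_eq_single h]
      · have key : ∀ i, projE 𝒜 (v h i * m) = v h i * m := by
          intro i
          exact hsame (by simpa using SetLike.mul_mem_graded (hv h i) hm)
        calc m = ε h * m := ((hid h m hm).1).symm
          _ = (∑ i, u h i * v h i) * m := by rw [huv]
          _ = ∑ i, u h i * (v h i * m) := by rw [Finset.sum_mul]; simp [mul_assoc]
          _ = ∑ i, u h i * projE 𝒜 (v h i * m) := by simp [key]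
      · intro g _ hgh
        apply Finset.sum_eq_zero
        intro i _
        have : projE 𝒜 (v g i * m) = 0 := by
          refine hne (SetLike.mul_mem_graded (hv g i) hm) ?_
          intro hc
          exact hgh (by rwa [neg_add_eq_zero] at hc)
        rw [this, mul_zero]
      · intro hc
        exact absurd (Finset.mem_univ h) hc
    | add a b ha hb =>
      calc a + b
          = (∑ g : ι, ∑ i, u g i * projE 𝒜 (v g i * a)) +
            ∑ g : ι, ∑ i, u g i * projE 𝒜 (v g i * b) := by rw [← ha, ← hb]
        _ = _ := by
            rw [← Finset.sum_add_distrib]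
            refine Finset.sum_congr rfl fun g _ => ?_
            rw [← Finset.sum_add_distrib]
            refine Finset.sum_congr rfl fun i _ => ?_
            rw [mul_add, hEadd, mul_add]
  · intro s
    induction s using DirectSum.Decomposition.inductionOn 𝒜 with
    | zero => simp [zero_mul, hEzero]
    | @homogeneous h m =>
      obtain ⟨m, hm⟩ := m
      show m = _
      rw [Finset.sum_eq_single (-h)]
      · have key : ∀ i, projE 𝒜 (m * u (-h) i) = m * u (-h) i := by
          intro i
          exact hsame (by simpa using SetLike.mul_mem_graded hm (hu (-h) i))
        calc m = m * ε (-h) := ((hid h m hm).2).symm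
          _ = m * ∑ i, u (-h) i * v (-h) i := by rw [huv]
          _ = ∑ i, (m * u (-h) i) * v (-h) i := by rw [Finset.mul_sum]; simp [mul_assoc]
          _ = ∑ i, projE 𝒜 (m * u (-h) i) * v (-h) i := by simp [key]
      · intro g _ hgh
        apply Finset.sum_eq_zero
        intro i _
        have : projE 𝒜 (m * u g i) = 0 := by
          refine hne (SetLike.mul_mem_graded hm (hu g i)) ?_
          intro hc
          exact hgh (by rw [← neg_eq_of_add_eq_zero_right hc])
        rw [this, zero_mul]
      · intro hc
        exact absurd (Finset.mem_univ (-h)) hc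
    | add a b ha hb =>
      calc a + b
          = (∑ g : ι, ∑ i, projE 𝒜 (a * u g i) * v g i) +
            ∑ g : ι, ∑ i, projE 𝒜 (b * u g i) * v g i := by rw [← ha, ← hb]
        _ = _ := by
            rw [← Finset.sum_add_distrib]
            refine Finset.sum_congr rfl fun g _ => ?_
            rw [← Finset.sum_add_distrib]
            refine Finset.sum_congr rfl fun i _ => ?_
            rw [add_mul, hEadd, add_mul]
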